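/- Let G be a connected graph on n ≥ 2 vertices with maximum degree Δ. For real α, let (^α m)_i = (Σ_{j∼i} d_jᵅ)/d_iᵅ, assume (^α m)₁ + d₁ ≥ ... ≥ (^α m)_n + d_n, and let N = max_{i∼j} d_jᵅ/d_iᵅ. Then for each 1 ≤ i ≤ n, ρ(Q(G)) ≤ ((^α m)_i + d_i + Δ − N + √(((^α m)_i + d_i − Δ + N)² + 4N Σ_{k=1}^{i−1}((^α m)_k + d_k − (^α m)_i − d_i)))/2. -/

import Mathlib

open Matrix Finset Real

/-- Spectral radius: largest modulus of a complex eigenvalue (root of the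
characteristic polynomial). -/
noncomputable def specRad {n : ℕ} (A : Matrix (Fin n) (Fin n) ℝ) : ℝ :=
  (((A.map (Complex.ofReal)).charpoly.roots).map (fun z => ‖z‖)).foldr max 0

/-- Irreducibility of a nonnegative matrix. -/
def Irred {n : ℕ} (A : Matrix (Fin n) (Fin n) ℝ) : Prop :=
  ∀ i j : Fin n, ∃ k : ℕ, 0 < (A ^ k) i j

private lemma foldr_max_le (x : ℝ) (s : Multiset ℝ) (hx : (0:ℝ) ≤ x)
    (h : ∀ a ∈ s, a ≤ x) : s.foldr max 0 ≤ x := by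
  induction s using Multiset.induction_on with
  | empty => simpa using hx
  | cons a s ih =>
    rw [Multiset.foldr_cons]
    exact max_le (h a (Multiset.mem_cons_self a s))
      (ih fun b hb => h b (Multiset.mem_cons_of_mem hb))

private lemma specRad_le_of_mulVec_le {n : ℕ} {A : Matrix (Fin n) (Fin n) ℝ}
    (hA : ∀ i j, 0 ≤ A i j) {z : Fin n → ℝ} (hz : ∀ i, 0 < z i) {lam : ℝ}
    (hlam : 0 ≤ lam) (h : ∀ i, A.mulVec z i ≤ lam * z i) :
    specRad A ≤ lam := by
  unfold specRad
  apply foldr_max_le lam _ hlam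
  intro a ha
  obtain ⟨μ, hμ, rfl⟩ := Multiset.mem_map.mp ha
  set A' := A.map (Complex.ofReal) with hA'
  have hroot : A'.charpoly.IsRoot μ :=
    (Polynomial.mem_roots (A'.charpoly_monic.ne_zero)).mp hμ
  have hdet : (Matrix.scalar (Fin n) μ - A').det = 0 := by
    have hmap : ((charmatrix A').map (Polynomial.eval μ)) = Matrix.scalar (Fin n) μ - A' := by
      ext a b
      by_cases hab : a = b
      · subst hab
        simp [charmatrix_apply_eq, Matrix.scalar_apply, Matrix.sub_apply]
      · simp [charmatrix_apply_ne _ _ _ hab, Matrix.scalar_apply, Matrix.sub_apply,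
          Matrix.diagonal_apply_ne _ hab]
    have : Polynomial.eval μ A'.charpoly = ((charmatrix A').map (Polynomial.eval μ)).det := by
      rw [Matrix.charpoly]
      exact RingHom.map_det (Polynomial.evalRingHom μ) (charmatrix A')
    rw [← hmap, ← this]
    exact hroot
  obtain ⟨v, hv0, hv⟩ := Matrix.exists_mulVec_eq_zero_iff.mpr hdet
  have hAv : A'.mulVec v = μ • v := by
    rw [Matrix.sub_mulVec] at hv
    have h1 : (Matrix.scalar (Fin n) μ).mulVec v = μ • v := by
      ext j
      simp [Matrix.scalar_apply, Matrix.mulVec_diagonal]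
    rw [h1] at hv
    exact (sub_eq_zero.mp hv).symm
  have hne : (Finset.univ : Finset (Fin n)).Nonempty := by
    rcases Function.ne_iff.mp hv0 with ⟨j, _⟩
    exact ⟨j, Finset.mem_univ j⟩
  obtain ⟨k, -, hk⟩ := Finset.exists_max_image Finset.univ
    (fun j => ‖v j‖ / z j) hne
  set c := ‖v k‖ / z k with hc
  have hcz : ∀ j, ‖v j‖ ≤ c * z j := by
    intro j
    have := hk j (Finset.mem_univ j)
    rw [div_le_iff₀ (hz j)] at this
    linarith [this]
  have hcpos : 0 < c := by
    rcases Function.ne_iff.mp hv0 with ⟨j, hj⟩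
    have hj' : v j ≠ 0 := by simpa using hj
    have h0 : 0 < ‖v j‖ / z j :=
      div_pos (norm_pos_iff.mpr hj') (hz j)
    exact lt_of_lt_of_le h0 (hk j (Finset.mem_univ j))
  have hvk : ‖v k‖ = c * z k := by
    rw [hc, div_mul_cancel₀ _ (hz k).ne']
  have hvkpos : 0 < ‖v k‖ := by
    rw [hvk]; exact mul_pos hcpos (hz k)
  have key : ‖μ‖ * ‖v k‖ ≤ lam * ‖v k‖ := by
    have e1 : ‖μ‖ * ‖v k‖ = ‖(A'.mulVec v) k‖ := by
      rw [hAv]; simp [Pi.smul_apply, smul_eq_mul, norm_mul]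
    have e2 : ‖(A'.mulVec v) k‖ ≤ ∑ j, A k j * ‖v j‖ := by
      rw [Matrix.mulVec, dotProduct]
      refine le_trans (norm_sum_le _ _) (le_of_eq ?_)
      refine Finset.sum_congr rfl fun j _ => ?_
      rw [norm_mul]
      congr 1
      simp only [hA', Matrix.map_apply, Complex.norm_real, Real.norm_eq_abs]
      exact abs_of_nonneg (hA k j)
    have e3 : ∑ j, A k j * ‖v j‖ ≤ ∑ j, A k j * (c * z j) :=
      Finset.sum_le_sum fun j _ => mul_le_mul_of_nonneg_left (hcz j) (hA k j)
    have e4 : ∑ j, A k j * (c * z j) = c * (A.mulVec z) k := by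
      rw [Matrix.mulVec, dotProduct, Finset.mul_sum]
      exact Finset.sum_congr rfl fun j _ => by ring
    have e5 : c * (A.mulVec z) k ≤ c * (lam * z k) :=
      mul_le_mul_of_nonneg_left (h k) hcpos.le
    calc ‖μ‖ * ‖v k‖ = ‖(A'.mulVec v) k‖ := e1
    _ ≤ ∑ j, A k j * ‖v j‖ := e2
    _ ≤ ∑ j, A k j * (c * z j) := e3
    _ = c * (A.mulVec z) k := e4
    _ ≤ c * (lam * z k) := e5
    _ = lam * (c * z k) := by ring
    _ = lam * ‖v k‖ := by rw [hvk]
  exact le_of_mul_le_mul_right key hvkpos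

private lemma quad_aux {n : ℕ} (G : SimpleGraph (Fin n)) [DecidableRel G.Adj]
    (d p m : Fin n → ℝ) (Δ N : ℝ) (i : Fin n)
    (hd1 : ∀ k, 1 ≤ d k) (hppos : ∀ k, 0 < p k)
    (hmp : ∀ k, p k * m k = ∑ j ∈ G.neighborFinset k, p j)
    (hΔd : ∀ k, d k ≤ Δ)
    (hNub : ∀ k j, G.Adj k j → p j ≤ N * p k) (hNpos : 0 < N)
    (hord : ∀ k j : Fin n, k ≤ j → m j + d j ≤ m k + d k) :
    specRad (Matrix.diagonal d + G.adjMatrix ℝ) ≤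
      (m i + d i + Δ - N +
        Real.sqrt ((m i + d i - Δ + N) ^ 2 +
          4 * N * ∑ k ∈ Finset.Iio i, (m k + d k - m i - d i))) / 2 := by
  have hm0 : ∀ k, 0 ≤ m k := by
    intro k
    have h1 : 0 ≤ ∑ j ∈ G.neighborFinset k, p j :=
      Finset.sum_nonneg fun j _ => (hppos j).le
    nlinarith [hmp k, hppos k]
  set M : ℝ := ∑ k ∈ Finset.Iio i, (m k + d k - m i - d i) with hMdef
  have hM : 0 ≤ M := by
    refine Finset.sum_nonneg fun k hk => ?_
    have := hord k i (le_of_lt (Finset.mem_Iio.mp hk))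
    linarith
  set s : ℝ := Real.sqrt ((m i + d i - Δ + N) ^ 2 + 4 * N * M) with hsdef
  have hs0 : 0 ≤ s := Real.sqrt_nonneg _
  have hs2 : s ^ 2 = (m i + d i - Δ + N) ^ 2 + 4 * N * M := by
    rw [hsdef]
    exact Real.sq_sqrt (by nlinarith)
  set lam : ℝ := (m i + d i + Δ - N + s) / 2 with hlamdef
  have hlam_ri : m i + d i ≤ lam := by nlinarith [sq_nonneg (s - (m i + d i - Δ + N))]
  have hlam_DN : Δ - N ≤ lam := by nlinarith [sq_nonneg (s + (m i + d i - Δ + N))]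
  have hlam0 : 0 ≤ lam := le_trans (by linarith [hd1 i, hm0 i]) hlam_ri
  have hdpos : ∀ k, 0 < d k := fun k => lt_of_lt_of_le one_pos (hd1 k)
  have hQnn : ∀ k j, 0 ≤ (Matrix.diagonal d + G.adjMatrix ℝ) k j := by
    intro k j
    have h1 : 0 ≤ (Matrix.diagonal d) k j := by
      rcases eq_or_ne k j with h | h
      · subst h; rw [Matrix.diagonal_apply_eq]; exact (hdpos k).le
      · rw [Matrix.diagonal_apply_ne _ h]
    have h2 : 0 ≤ (G.adjMatrix ℝ) k j := by
      rw [SimpleGraph.adjMatrix_apply]; split_ifs <;> norm_num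
    rw [Matrix.add_apply]
    exact add_nonneg h1 h2
  have hQmv : ∀ (ζ : Fin n → ℝ) k, (Matrix.diagonal d + G.adjMatrix ℝ).mulVec ζ k
      = d k * ζ k + ∑ j ∈ G.neighborFinset k, ζ j := by
    intro ζ k
    rw [Matrix.add_mulVec, Pi.add_apply, Matrix.mulVec_diagonal,
      SimpleGraph.adjMatrix_mulVec_apply]
  by_cases hcase : Δ - N < lam
  · -- main case
    set c : ℝ := lam - Δ + N with hcdef
    have hcpos : 0 < c := by rw [hcdef]; linarith
    have key : (lam - (m i + d i)) * c = N * M := by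
      have expand : (lam - (m i + d i)) * c = (s ^ 2 - (m i + d i - Δ + N) ^ 2) / 4 := by
        rw [hcdef, hlamdef]; ring
      rw [expand, hs2]; ring
    obtain ⟨w, hwdef⟩ : ∃ w : Fin n → ℝ,
        ∀ k, w k = if k < i then m k + d k - m i - d i else 0 :=
      ⟨_, fun k => rfl⟩
    have hw0 : ∀ k, 0 ≤ w k := by
      intro k
      rw [hwdef k]
      split_ifs with hk
      · have := hord k i (le_of_lt hk); linarith
      · exact le_refl 0
    have hwsum : ∑ k ∈ Finset.Iio i, w k = M := by
      rw [hMdef]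
      refine Finset.sum_congr rfl fun k hk => ?_
      rw [hwdef k, if_pos (Finset.mem_Iio.mp hk)]
    obtain ⟨z, hzval⟩ : ∃ z : Fin n → ℝ, ∀ k, z k = c + w k := ⟨_, fun k => rfl⟩
    have hzpos : ∀ k, 0 < z k := fun k => by
      rw [hzval k]; linarith [hw0 k]
    obtain ⟨ζ, hζval⟩ : ∃ ζ : Fin n → ℝ, ∀ k, ζ k = p k * z k := ⟨_, fun k => rfl⟩
    have hζpos : ∀ k, 0 < ζ k := fun k => by
      rw [hζval k]; exact mul_pos (hppos k) (hzpos k)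
    have hmain : ∀ k, (Matrix.diagonal d + G.adjMatrix ℝ).mulVec ζ k ≤ lam * ζ k := by
      intro k
      rw [hQmv]
      have hwT : ∑ j ∈ G.neighborFinset k, w j ≤ ∑ j ∈ (Finset.Iio i).erase k, w j := by
        rw [← Finset.sum_filter_add_sum_filter_not (G.neighborFinset k)
          (fun j => j ∈ (Finset.Iio i).erase k) w]
        have hz2 : ∑ j ∈ (G.neighborFinset k).filter
            (fun j => ¬ j ∈ (Finset.Iio i).erase k), w j = 0 := by
          refine Finset.sum_eq_zero fun j hj => ?_
          obtain ⟨hj1, hj2⟩ := Finset.mem_filter.mp hj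
          have hjk : j ≠ k := by
            intro hh
            rw [hh] at hj1
            exact G.irrefl ((SimpleGraph.mem_neighborFinset G k k).mp hj1)
          have hji : j ∉ Finset.Iio i := fun hh => hj2 (Finset.mem_erase.mpr ⟨hjk, hh⟩)
          rw [hwdef j, if_neg (fun hh => hji (Finset.mem_Iio.mpr hh))]
        rw [hz2, add_zero]
        exact Finset.sum_le_sum_of_subset_of_nonneg
          (fun j hj => (Finset.mem_filter.mp hj).2) (fun j _ _ => hw0 j)
      have hnb : ∑ j ∈ G.neighborFinset k, ζ j
          ≤ c * (p k * m k) + N * p k * (∑ j ∈ (Finset.Iio i).erase k, w j) := by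
        have e1 : ∑ j ∈ G.neighborFinset k, ζ j
            = c * (∑ j ∈ G.neighborFinset k, p j) + ∑ j ∈ G.neighborFinset k, p j * w j := by
          rw [Finset.mul_sum, ← Finset.sum_add_distrib]
          refine Finset.sum_congr rfl fun j _ => ?_
          rw [hζval j, hzval j]; ring
        have e2 : ∑ j ∈ G.neighborFinset k, p j * w j
            ≤ ∑ j ∈ G.neighborFinset k, (N * p k) * w j :=
          Finset.sum_le_sum fun j hj => mul_le_mul_of_nonneg_right
            (hNub k j ((SimpleGraph.mem_neighborFinset G k j).mp hj)) (hw0 j)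
        have e3 : ∑ j ∈ G.neighborFinset k, (N * p k) * w j
            = N * p k * ∑ j ∈ G.neighborFinset k, w j := by rw [Finset.mul_sum]
        have e4 : N * p k * (∑ j ∈ G.neighborFinset k, w j)
            ≤ N * p k * (∑ j ∈ (Finset.Iio i).erase k, w j) := by
          exact mul_le_mul_of_nonneg_left hwT (mul_nonneg hNpos.le (hppos k).le)
        rw [e1, ← hmp k]
        have := e3 ▸ e2
        linarith [this, e4]
      rcases lt_or_ge k i with hki | hik
      · have hTval : ∑ j ∈ (Finset.Iio i).erase k, w j = M - w k := by
          have hkmem : k ∈ Finset.Iio i := Finset.mem_Iio.mpr hki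
          rw [Finset.sum_erase_eq_sub hkmem, hwsum]
        have hwk : w k = m k + d k - m i - d i := by
          rw [hwdef k, if_pos hki]
        have hrk : m i + d i ≤ m k + d k := hord k i (le_of_lt hki)
        have hprod : 0 ≤ (m k + d k - m i - d i) * (Δ - d k) :=
          mul_nonneg (by linarith) (by linarith [hΔd k])
        have hc2 : c = lam - Δ + N := hcdef
        have goal2 : d k * z k + c * m k + N * (M - w k) ≤ lam * z k := by
          have iden : lam * z k - (d k * z k + c * m k + N * (M - w k))
              = (m k + d k - m i - d i) * (Δ - d k)
                + ((lam - (m i + d i)) * c - N * M) := by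
            rw [hzval k, hwk, hc2]; ring
          linarith [iden, hprod, key.le, key.ge]
        calc d k * ζ k + ∑ j ∈ G.neighborFinset k, ζ j
            ≤ d k * ζ k + (c * (p k * m k) + N * p k * (M - w k)) := by
              rw [← hTval]
              linarith [hnb]
          _ = p k * (d k * z k + c * m k + N * (M - w k)) := by rw [hζval k]; ring
          _ ≤ p k * (lam * z k) := mul_le_mul_of_nonneg_left goal2 (hppos k).le
          _ = lam * ζ k := by rw [hζval k]; ring
      · have hknotmem : k ∉ Finset.Iio i := by
          rw [Finset.mem_Iio]; exact not_lt.mpr hik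
        have hTval : ∑ j ∈ (Finset.Iio i).erase k, w j = M := by
          rw [Finset.erase_eq_of_notMem hknotmem, hwsum]
        have hwk : w k = 0 := by
          rw [hwdef k, if_neg (not_lt.mpr hik)]
        have hzk : z k = c := by rw [hzval k, hwk, add_zero]
        have hrk : m k + d k ≤ m i + d i := hord i k hik
        have goal2 : d k * z k + c * m k + N * M ≤ lam * z k := by
          have iden : lam * z k - (d k * z k + c * m k + N * M)
              = c * (m i + d i - (m k + d k)) + ((lam - (m i + d i)) * c - N * M) := by
            rw [hzk]; ring
          have hcc : 0 ≤ c * (m i + d i - (m k + d k)) :=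
            mul_nonneg hcpos.le (by linarith)
          linarith [iden, hcc, key.le, key.ge]
        calc d k * ζ k + ∑ j ∈ G.neighborFinset k, ζ j
            ≤ d k * ζ k + (c * (p k * m k) + N * p k * M) := by
              rw [← hTval]; linarith [hnb]
          _ = p k * (d k * z k + c * m k + N * M) := by rw [hζval k]; ring
          _ ≤ p k * (lam * z k) := mul_le_mul_of_nonneg_left goal2 (hppos k).le
          _ = lam * ζ k := by rw [hζval k]; ring
    exact specRad_le_of_mulVec_le hQnn hζpos hlam0 hmain
  · -- degenerate case: lam = Δ - N
    have hlameq : lam = Δ - N := le_antisymm (not_lt.mp hcase) hlam_DN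
    have hNM : N * M = 0 := by nlinarith [hs2, hs0]
    have hM0 : M = 0 := by
      rcases mul_eq_zero.mp hNM with h | h
      · exact absurd h hNpos.ne'
      · exact h
    have hallle : ∀ k, m k + d k ≤ m i + d i := by
      intro k
      rcases lt_or_ge k i with hki | hik
      · have heach := (Finset.sum_eq_zero_iff_of_nonneg
          (fun k hk => by linarith [hord k i (le_of_lt (Finset.mem_Iio.mp hk))])).mp
          (hMdef ▸ hM0) k (Finset.mem_Iio.mpr hki)
        linarith
      · exact hord i k hik
    have hmain : ∀ k, (Matrix.diagonal d + G.adjMatrix ℝ).mulVec p k ≤ lam * p k := by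
      intro k
      rw [hQmv, ← hmp k]
      have e : d k * p k + p k * m k = p k * (m k + d k) := by ring
      rw [e]
      calc p k * (m k + d k) ≤ p k * (m i + d i) :=
            mul_le_mul_of_nonneg_left (hallle k) (hppos k).le
        _ ≤ p k * lam := mul_le_mul_of_nonneg_left hlam_ri (hppos k).le
        _ = lam * p k := by ring
    exact specRad_le_of_mulVec_le hQnn hppos hlam0 hmain

theorem stmt_11 {n : ℕ} (hn : 2 ≤ n) (G : SimpleGraph (Fin n)) [DecidableRel G.Adj]
    (hconn : G.Connected) (α : ℝ)
    (Δ : ℝ) (hΔ : IsGreatest {x | ∃ i, x = (G.degree i : ℝ)} Δ)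
    (m : Fin n → ℝ)
    (hm : ∀ i, m i = (∑ j ∈ G.neighborFinset i, (G.degree j : ℝ) ^ α) / (G.degree i : ℝ) ^ α)
    (hord : ∀ i j : Fin n, i ≤ j → m j + (G.degree j : ℝ) ≤ m i + (G.degree i : ℝ))
    (N : ℝ) (hN : IsGreatest {x | ∃ i j, G.Adj i j ∧ x = (G.degree j : ℝ) ^ α / (G.degree i : ℝ) ^ α} N) :
    ∀ i : Fin n,
      specRad (Matrix.diagonal (fun i => (G.degree i : ℝ)) + G.adjMatrix ℝ) ≤
        (m i + (G.degree i : ℝ) + Δ - N +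
          Real.sqrt ((m i + (G.degree i : ℝ) - Δ + N) ^ 2 +
            4 * N * ∑ k ∈ Finset.Iio i,
              (m k + (G.degree k : ℝ) - m i - (G.degree i : ℝ)))) / 2 := by
  intro i
  have hadj_ex : ∀ v : Fin n, ∃ w, G.Adj v w := by
    intro v
    obtain ⟨u, hu⟩ : ∃ u : Fin n, u ≠ v := by
      rcases eq_or_ne v ⟨0, by omega⟩ with h | h
      · exact ⟨⟨1, by omega⟩, by rw [h]; intro hh; exact absurd (congrArg Fin.val hh) (by simp)⟩
      · exact ⟨⟨0, by omega⟩, fun hh => h hh.symm⟩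
    obtain ⟨pth⟩ := hconn.preconnected v u
    obtain ⟨w, hw, -, -⟩ := SimpleGraph.Walk.not_nil_iff.mp
      (SimpleGraph.Walk.not_nil_of_ne (fun hh => hu hh.symm) (p := pth))
    exact ⟨w, hw⟩
  have hd1 : ∀ k : Fin n, (1:ℝ) ≤ (G.degree k : ℝ) := by
    intro k
    have : 0 < G.degree k := (G.degree_pos_iff_exists_adj k).mpr (hadj_ex k)
    exact_mod_cast this
  have hdpos : ∀ k : Fin n, (0:ℝ) < (G.degree k : ℝ) :=
    fun k => lt_of_lt_of_le one_pos (hd1 k)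
  have hppos : ∀ k : Fin n, 0 < (G.degree k : ℝ) ^ α :=
    fun k => Real.rpow_pos_of_pos (hdpos k) α
  have hmp : ∀ k, (G.degree k : ℝ) ^ α * m k
      = ∑ j ∈ G.neighborFinset k, (G.degree j : ℝ) ^ α := by
    intro k
    rw [hm k, mul_comm, div_mul_cancel₀ _ (hppos k).ne']
  have hNub : ∀ k j, G.Adj k j → (G.degree j : ℝ) ^ α ≤ N * (G.degree k : ℝ) ^ α := by
    intro k j hkj
    have h2 := hN.2 ⟨k, j, hkj, rfl⟩
    rw [div_le_iff₀ (hppos k)] at h2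
    linarith
  have hNpos : 0 < N := by
    obtain ⟨a, b, hab, hNe⟩ := hN.1
    rw [hNe]
    exact div_pos (hppos b) (hppos a)
  exact quad_aux G (fun k => (G.degree k : ℝ)) (fun k => (G.degree k : ℝ) ^ α) m Δ N i
    hd1 hppos hmp (fun k => hΔ.2 ⟨k, rfl⟩) hNub hNpos hord
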